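/- For real z with 0 ≤ z < 1: ∑_{(m,n): 1 ≤ m ≤ n, gcd(m,n)=1} (m/n^2) · log(1/(1 - z^n)) = (1/2)·log(1/(1-z)) + z/(2(1-z)). Equivalently, ∏_{1≤m≤n, gcd(m,n)=1} (1/(1-z^n))^{m/n^2} = (1-z)^{-1/2} · exp(z/(2(1-z))). -/

import Mathlib

open Real Finset Function

private lemma sum_coprime_aux' {n : ℕ} (hn : 2 ≤ n) :
    2 * ∑ m ∈ (Finset.range (n+1)).filter (fun m => Nat.gcd m n = 1), m = n * Nat.totient n := by
  have hnn : ¬ Nat.gcd n n = 1 := by rw [Nat.gcd_self]; omega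
  have hrange : (Finset.range (n+1)).filter (fun m => Nat.gcd m n = 1)
      = (Finset.range n).filter (fun m => Nat.gcd m n = 1) := by
    rw [Finset.range_add_one, Finset.filter_insert, if_neg hnn]
  rw [hrange]
  set T := (Finset.range n).filter (fun m => Nat.gcd m n = 1) with hT
  have hmem : ∀ m ∈ T, m < n ∧ Nat.gcd m n = 1 := by
    intro m hm; simpa [hT] using hm
  have hmap : ∀ m ∈ T, n - m ∈ T := by
    intro m hm
    obtain ⟨h1, h2⟩ := hmem m hm
    have hm0 : m ≠ 0 := by rintro rfl; rw [Nat.gcd_zero_left] at h2; omega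
    simp only [hT, Finset.mem_filter, Finset.mem_range]
    exact ⟨by omega, (Nat.coprime_self_sub_left h1.le).mpr h2⟩
  have key : ∑ m ∈ T, m = ∑ m ∈ T, (n - m) := by
    refine Finset.sum_nbij' (fun m => n - m) (fun m => n - m) hmap hmap ?_ ?_ ?_
    · intro a ha; have := (hmem a ha).1; omega
    · intro a ha; have := (hmem a ha).1; omega
    · intro a ha; have := (hmem a ha).1; omega
  have h2 : 2 * ∑ m ∈ T, m = ∑ m ∈ T, n := by
    rw [two_mul]; nth_rewrite 2 [key]
    rw [← Finset.sum_add_distrib]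
    refine Finset.sum_congr rfl fun m hm => ?_
    have := (hmem m hm).1; omega
  have hcard : T = (Finset.range n).filter (fun a => n.Coprime a) := by
    ext a; simp [hT, Nat.Coprime, Nat.gcd_comm]
  have hc : T.card = Nat.totient n := by rw [Nat.totient_eq_card_coprime, hcard]
  rw [h2, Finset.sum_const, smul_eq_mul, hc, mul_comm]

/-- inner log expansion weighted by totient -/
private lemma hasSum_inner' (z : ℝ) (hz0 : 0 ≤ z) (hz1 : z < 1) {n : ℕ} (hn : n ≠ 0) :
    HasSum (fun k : ℕ => (Nat.totient n : ℝ) * z ^ (n * k) / ((n * k : ℕ) : ℝ))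
      ((Nat.totient n / n : ℝ) * Real.log (1 / (1 - z ^ n))) := by
  have hzn : z ^ n < 1 := pow_lt_one₀ hz0 hz1 hn
  have hzn0 : (0:ℝ) ≤ z ^ n := pow_nonneg hz0 n
  have habs : |z ^ n| < 1 := by rw [abs_of_nonneg hzn0]; exact hzn
  have h1 := (hasSum_pow_div_log_of_abs_lt_one habs).mul_left ((Nat.totient n : ℝ) / n)
  have hlog : -Real.log (1 - z ^ n) = Real.log (1 / (1 - z ^ n)) := by
    rw [one_div, Real.log_inv]
  rw [hlog] at h1
  refine (hasSum_nat_add_iff' 1).mp ?_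
  have hfun : ∀ k : ℕ, (Nat.totient n : ℝ) * z ^ (n * (k + 1)) / ((n * (k + 1) : ℕ) : ℝ)
      = ((Nat.totient n : ℝ) / n) * ((z ^ n) ^ (k + 1) / ((k : ℝ) + 1)) := by
    intro k
    have hn' : (n:ℝ) ≠ 0 := Nat.cast_ne_zero.mpr hn
    have hk' : ((k:ℝ)+1) ≠ 0 := by positivity
    rw [← pow_mul]
    push_cast
    field_simp
  simp only [Finset.range_one, Finset.sum_singleton, Nat.mul_zero, Nat.cast_zero, div_zero,
    sub_zero, hfun]
  convert h1 using 2 with k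

private def mulFiberEquiv' : (ℕ × ℕ) ≃ Σ N : ℕ, {x : ℕ × ℕ // x.1 * x.2 = N} where
  toFun p := ⟨p.1 * p.2, p, rfl⟩
  invFun q := q.2.val
  left_inv p := rfl
  right_inv q := by rcases q with ⟨N, x, rfl⟩; rfl

/-- Lambert-type identity: `∑ φ(n)/n · log(1/(1-z^n)) = z/(1-z)`. -/
private lemma hasSum_lambert' (z : ℝ) (hz0 : 0 ≤ z) (hz1 : z < 1) :
    HasSum (fun n : ℕ => (Nat.totient n / n : ℝ) * Real.log (1 / (1 - z ^ n))) (z / (1 - z)) := by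
  have hz' : (0:ℝ) < 1 - z := by linarith
  set G : ℕ × ℕ → ℝ := fun p => (Nat.totient p.1 : ℝ) * z ^ (p.1 * p.2) / ((p.1 * p.2 : ℕ) : ℝ)
    with hG
  have hGnonneg : ∀ p, 0 ≤ G p := by
    intro p
    apply div_nonneg (mul_nonneg (Nat.cast_nonneg _) (pow_nonneg hz0 _)) (Nat.cast_nonneg _)
  -- fiberwise sums over the sigma type of products
  set GS : (Σ N : ℕ, {x : ℕ × ℕ // x.1 * x.2 = N}) → ℝ := fun q => G q.2.val with hGS
  have hfiber0 : HasSum (fun x : {x : ℕ × ℕ // x.1 * x.2 = 0} => G x.val) 0 := by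
    convert hasSum_zero with x
    rcases x with ⟨x, hx⟩
    simp only [hG, hx, Nat.cast_zero, div_zero]
  have hfiberN : ∀ N : ℕ, N ≠ 0 →
      HasSum (fun x : {x : ℕ × ℕ // x.1 * x.2 = N} => G x.val) (z ^ N) := by
    intro N hN
    have hsum := ((N:ℕ).divisorsAntidiagonal).hasSum G
    have heq : ∑ x ∈ (N:ℕ).divisorsAntidiagonal, G x = z ^ N := by
      simp only [hG]
      rw [Nat.sum_divisorsAntidiagonal
        (f := fun a b => (Nat.totient a : ℝ) * z ^ (a * b) / ((a * b : ℕ) : ℝ))]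
      have : ∀ d ∈ (N:ℕ).divisors,
          (Nat.totient d : ℝ) * z ^ (d * (N / d)) / ((d * (N / d) : ℕ) : ℝ)
            = (Nat.totient d : ℝ) * (z ^ N / (N : ℝ)) := by
        intro d hd
        have hdvd : d ∣ N := Nat.dvd_of_mem_divisors hd
        rw [Nat.mul_div_cancel' hdvd, mul_div_assoc]
      rw [Finset.sum_congr rfl this, ← Finset.sum_mul, ← Nat.cast_sum]
      rw [Nat.sum_totient]
      field_simp
    rw [heq] at hsum
    -- transfer from the divisorsAntidiagonal coe to the fiber subtype
    let e : {x : ℕ × ℕ // x ∈ (N:ℕ).divisorsAntidiagonal} ≃ {x : ℕ × ℕ // x.1 * x.2 = N} :=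
      Equiv.subtypeEquivRight (fun x => by simp [Nat.mem_divisorsAntidiagonal, hN])
    refine e.hasSum_iff.mp ?_
    exact hsum
  -- the outer series over N
  set h : ℕ → ℝ := fun N => if N = 0 then 0 else z ^ N with hh
  have hgeo : HasSum (fun N : ℕ => z ^ N) (1 - z)⁻¹ := hasSum_geometric_of_lt_one hz0 hz1
  have hupd := hgeo.update 0 0
  have hhupd : h = Function.update (fun N : ℕ => z ^ N) 0 0 := by
    funext N
    rw [Function.update_apply, hh]
  have hhsum : HasSum h (z / (1 - z)) := by
    rw [hhupd]
    convert hupd using 1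
    · rfl
    rw [pow_zero]
    field_simp
    ring
  -- fiberwise sums for the sigma decomposition
  have hfib : ∀ N : ℕ, HasSum (fun x : {x : ℕ × ℕ // x.1 * x.2 = N} => GS ⟨N, x⟩) (h N) := by
    intro N
    by_cases hN : N = 0
    · subst hN
      simpa [hGS, hh] using hfiber0
    · simpa [hGS, hh, if_neg hN] using hfiberN N hN
  have hGSsummable : Summable GS := by
    refine (summable_sigma_of_nonneg (fun x => hGnonneg _)).mpr ⟨fun N => (hfib N).summable, ?_⟩
    have : (fun N : ℕ => ∑' x : {x : ℕ × ℕ // x.1 * x.2 = N}, GS ⟨N, x⟩) = h :=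
      funext fun N => (hfib N).tsum_eq
    rw [this]
    exact hhsum.summable
  have hGSsum : HasSum GS (z / (1 - z)) :=
    HasSum.sigma_of_hasSum hhsum hfib hGSsummable
  have hGsum : HasSum G (z / (1 - z)) := by
    have := mulFiberEquiv'.hasSum_iff.mpr hGSsum
    convert this using 1
    rfl
  -- fiberwise over n
  refine hGsum.prod_fiberwise fun n => ?_
  by_cases hn : n = 0
  · subst hn
    convert (hasSum_zero : HasSum (fun _ : ℕ => (0:ℝ)) 0) with k
    · simp [hG]
    · simp
  · exact hasSum_inner' z hz0 hz1 hn

theorem stmt_16 (z : ℝ) (hz0 : 0 ≤ z) (hz1 : z < 1) :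
    (∑' p : {p : ℕ+ × ℕ+ // p.1 ≤ p.2 ∧ Nat.gcd (p.1 : ℕ) (p.2 : ℕ) = 1},
        ((p.val.1 : ℝ) / (p.val.2 : ℝ) ^ 2) * Real.log (1 / (1 - z ^ (p.val.2 : ℕ))) =
      1 / 2 * Real.log (1 / (1 - z)) + z / (2 * (1 - z))) ∧
    (∏' p : {p : ℕ+ × ℕ+ // p.1 ≤ p.2 ∧ Nat.gcd (p.1 : ℕ) (p.2 : ℕ) = 1},
        (1 / (1 - z ^ (p.val.2 : ℕ))) ^ ((p.val.1 : ℝ) / (p.val.2 : ℝ) ^ 2) =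
      (1 - z) ^ (-(1 / 2) : ℝ) * Real.exp (z / (2 * (1 - z)))) := by
  have hz' : (0:ℝ) < 1 - z := by linarith
  set L : ℕ → ℝ := fun n => Real.log (1 / (1 - z ^ n)) with hLdef
  have hzn : ∀ n : ℕ, n ≠ 0 → z ^ n < 1 := fun n hn => pow_lt_one₀ hz0 hz1 hn
  have hLnonneg : ∀ n : ℕ, n ≠ 0 → 0 ≤ L n := by
    intro n hn
    rw [hLdef]
    simp only [one_div]
    rw [Real.log_inv]
    have h1 := hzn n hn
    have h2 : 0 ≤ z ^ n := pow_nonneg hz0 n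
    have := Real.log_nonpos (by linarith : (0:ℝ) ≤ 1 - z ^ n) (by linarith : 1 - z ^ n ≤ 1)
    linarith
  set F : ℕ × ℕ → ℝ := fun q =>
    if q.2 ≤ q.1 ∧ Nat.gcd q.2 q.1 = 1 then ((q.2:ℝ)/(q.1:ℝ)^2) * L q.1 else 0 with hFdef
  have hcond_ne : ∀ q : ℕ × ℕ, (q.2 ≤ q.1 ∧ Nat.gcd q.2 q.1 = 1) → q.1 ≠ 0 := by
    rintro ⟨n, m⟩ ⟨h1, h2⟩ rfl
    interval_cases m
    simp at h2
  have hFnonneg : ∀ q, 0 ≤ F q := by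
    intro q
    simp only [hFdef]
    split_ifs with h
    · exact mul_nonneg (div_nonneg (Nat.cast_nonneg _) (by positivity)) (hLnonneg _ (hcond_ne q h))
    · exact le_rfl
  set S : ℕ → ℝ := fun n => (1/2) * ((Nat.totient n / n : ℝ) * L n)
    + (if n = 1 then (1/2) * L 1 else 0) with hSdef
  have hfib : ∀ n : ℕ, HasSum (fun m => F (n, m)) (S n) := by
    intro n
    have hvan : ∀ m ∉ Finset.range (n+1), F (n, m) = 0 := by
      intro m hm
      rw [Finset.mem_range] at hm
      have : ¬ (m ≤ n ∧ Nat.gcd m n = 1) := by intro h; exact hm (by omega)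
      simp only [hFdef, if_neg this]
    have hhs := hasSum_sum_of_ne_finset_zero (L := SummationFilter.unconditional ℕ) hvan
    have hsum_eq : ∑ m ∈ Finset.range (n+1), F (n, m) = S n := by
      have hstep : ∑ m ∈ Finset.range (n+1), F (n, m)
          = ∑ m ∈ (Finset.range (n+1)).filter (fun m => Nat.gcd m n = 1),
              ((m:ℝ)/(n:ℝ)^2 * L n) := by
        rw [Finset.sum_filter]
        refine Finset.sum_congr rfl fun m hm => ?_
        rw [Finset.mem_range] at hm
        simp only [hFdef]
        by_cases h : Nat.gcd m n = 1
        · rw [if_pos h, if_pos ⟨by omega, h⟩]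
        · rw [if_neg h, if_neg (by tauto)]
      rw [hstep]
      have hpull : ∑ m ∈ (Finset.range (n+1)).filter (fun m => Nat.gcd m n = 1),
          ((m:ℝ)/(n:ℝ)^2 * L n)
          = ((∑ m ∈ (Finset.range (n+1)).filter (fun m => Nat.gcd m n = 1), m : ℕ) : ℝ)
              * L n / (n:ℝ)^2 := by
        rw [Nat.cast_sum, Finset.sum_mul, Finset.sum_div]
        refine Finset.sum_congr rfl fun m _ => ?_
        ring
      rw [hpull]
      match n, (by omega : n = 0 ∨ n = 1 ∨ 2 ≤ n) with
      | 0, _ => simp [hSdef]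
      | 1, _ =>
        rw [hSdef]
        norm_num [Finset.sum_filter]
        ring
      | (Nat.succ (Nat.succ k)), h =>
        have h2 : 2 ≤ k + 2 := by omega
        have hc := sum_coprime_aux' h2
        have hc' : ((∑ m ∈ (Finset.range (k+2+1)).filter (fun m => Nat.gcd m (k+2) = 1), m : ℕ) : ℝ)
            = (k+2 : ℝ) * (Nat.totient (k+2) : ℝ) / 2 := by
          have := congrArg (fun x : ℕ => (x : ℝ)) hc
          push_cast at this ⊢
          linarith
        rw [hSdef]
        simp only [if_neg (by omega : ¬ (k+2) = 1), add_zero]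
        rw [hc']
        have hne : ((k:ℝ)+2) ≠ 0 := by positivity
        push_cast
        field_simp
        ring
    rw [← hsum_eq]
    exact hhs
  -- sum of S
  set T : ℝ := (1/2) * (z / (1 - z)) + (1/2) * L 1 with hTdef
  have hS : HasSum S T := by
    have h1 := (hasSum_lambert' z hz0 hz1).mul_left (1/2)
    have h2 : HasSum (fun n : ℕ => if n = 1 then (1/2) * L 1 else 0) ((1/2) * L 1) :=
      hasSum_ite_eq 1 _
    exact h1.add h2
  -- summability over the sigma type, then HasSum F T
  have hsig : Summable (F ∘ (Equiv.sigmaEquivProd ℕ ℕ)) := by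
    refine (summable_sigma_of_nonneg (fun x => hFnonneg _)).mpr ⟨fun n => (hfib n).summable, ?_⟩
    have : (fun n : ℕ => ∑' m : ℕ, F ((Equiv.sigmaEquivProd ℕ ℕ) ⟨n, m⟩)) = S :=
      funext fun n => (hfib n).tsum_eq
    rw [this]
    exact hS.summable
  have hFT : HasSum F T := by
    refine (Equiv.sigmaEquivProd ℕ ℕ).hasSum_iff.mp ?_
    exact HasSum.sigma_of_hasSum hS (fun n => hfib n) hsig
  -- transfer to the subtype via the injection p ↦ (n, m)
  have hinj : Function.Injective
      (fun p : {p : ℕ+ × ℕ+ // p.1 ≤ p.2 ∧ Nat.gcd (p.1 : ℕ) (p.2 : ℕ) = 1} =>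
        (((p.val.2 : ℕ), (p.val.1 : ℕ)) : ℕ × ℕ)) := by
    intro p q h
    simp only [Prod.mk.injEq] at h
    apply Subtype.ext
    apply Prod.ext
    · exact PNat.coe_injective h.2
    · exact PNat.coe_injective h.1
  have hvan : ∀ x : ℕ × ℕ, x ∉ Set.range
      (fun p : {p : ℕ+ × ℕ+ // p.1 ≤ p.2 ∧ Nat.gcd (p.1 : ℕ) (p.2 : ℕ) = 1} =>
        (((p.val.2 : ℕ), (p.val.1 : ℕ)) : ℕ × ℕ)) → F x = 0 := by
    intro x hx
    by_cases h : x.2 ≤ x.1 ∧ Nat.gcd x.2 x.1 = 1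
    · obtain ⟨h1, h2⟩ := h
      by_cases hm : x.2 = 0
      · rw [hm, Nat.gcd_zero_left] at h2
        simp only [hFdef, hm, Nat.cast_zero, zero_div, zero_mul, if_pos, and_true, h2]
        simp
      · exfalso
        apply hx
        have hn0 : x.1 ≠ 0 := hcond_ne x ⟨h1, h2⟩
        refine ⟨⟨(⟨x.2, Nat.pos_of_ne_zero hm⟩, ⟨x.1, Nat.pos_of_ne_zero hn0⟩), ?_, ?_⟩, ?_⟩
        · exact h1
        · exact h2
        · rfl
    · simp only [hFdef, if_neg h]
  have hmain : HasSum (fun p : {p : ℕ+ × ℕ+ // p.1 ≤ p.2 ∧ Nat.gcd (p.1 : ℕ) (p.2 : ℕ) = 1} =>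
      ((p.val.1 : ℝ) / (p.val.2 : ℝ) ^ 2) * Real.log (1 / (1 - z ^ (p.val.2 : ℕ)))) T := by
    have hcomp := (hinj.hasSum_iff hvan).mpr hFT
    convert hcomp with p
    simp only [Function.comp_apply, hFdef]
    rw [if_pos ⟨(PNat.coe_le_coe _ _).mpr p.2.1, p.2.2⟩]
  constructor
  · rw [hmain.tsum_eq, hTdef, hLdef]
    simp only [pow_one]
    rw [div_mul_div_comm, one_mul, add_comm]
  · have hprod := hmain.rexp
    have heq : (Real.exp ∘ fun p : {p : ℕ+ × ℕ+ // p.1 ≤ p.2 ∧ Nat.gcd (p.1 : ℕ) (p.2 : ℕ) = 1} =>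
        ((p.val.1 : ℝ) / (p.val.2 : ℝ) ^ 2) * Real.log (1 / (1 - z ^ (p.val.2 : ℕ))))
        = fun p => (1 / (1 - z ^ (p.val.2 : ℕ))) ^ ((p.val.1 : ℝ) / (p.val.2 : ℝ) ^ 2) := by
      funext p
      simp only [Function.comp_apply]
      have hpos : (0:ℝ) < 1 / (1 - z ^ ((p.val.2 : ℕ))) := by
        have := hzn (p.val.2 : ℕ) (p.val.2).pos.ne'
        have : (0:ℝ) < 1 - z ^ ((p.val.2 : ℕ)) := by linarith
        positivity
      rw [Real.rpow_def_of_pos hpos, mul_comm]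
    rw [heq] at hprod
    rw [hprod.tprod_eq]
    have e1 : Real.exp ((1/2) * Real.log (1/(1-z))) = (1 - z) ^ (-(1/2) : ℝ) := by
      rw [Real.rpow_def_of_pos hz']
      congr 1
      rw [show (1:ℝ)/(1-z) = (1-z)⁻¹ from one_div _, Real.log_inv]
      ring
    have e2 : (1:ℝ)/2 * (z/(1-z)) = z / (2*(1-z)) := by
      rw [div_mul_div_comm, one_mul]
    rw [hTdef, Real.exp_add, e2, hLdef]
    simp only [pow_one]
    rw [e1, mul_comm]
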